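/- Suppose u ∈ C²[0,1] solves -ε u'' + μ a u' + b u = f on (0,1), where a, b, f are continuous with ‖a‖, ‖b‖, ‖f‖ denoting sup norms, 0 < ε ≤ 1, 0 ≤ μ ≤ 1. Then for any 0 < r ≤ 1/2, sup_{[0,1]} |u'| ≤ C (1/r + μ/ε + r/ε) ‖u‖ + (r/ε) ‖f‖, where C depends only on ‖a‖, ‖a'‖ (assuming a ∈ C¹) and ‖b‖. -/

import Mathlib

open Set MeasureTheory intervalIntegral

set_option maxHeartbeats 1000000 in
/-- Derivative bound for the two-parameter singularly perturbed ODE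
`-ε u'' + μ a u' + b u = f` on (0,1): the constant depends only on the
sup norms of `a`, `a'` and `b`. -/
theorem deriv_bound_two_param (Ma Ma' Mb : ℝ) :
    ∃ C : ℝ, 0 < C ∧
    ∀ (ε μ : ℝ) (a b f u : ℝ → ℝ), 0 < ε → ε ≤ 1 → 0 ≤ μ → μ ≤ 1 →
      ContDiff ℝ 1 a → Continuous b → Continuous f → ContDiff ℝ 2 u →
      (∀ x ∈ Set.Icc (0 : ℝ) 1, |a x| ≤ Ma) →
      (∀ x ∈ Set.Icc (0 : ℝ) 1, |deriv a x| ≤ Ma') →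
      (∀ x ∈ Set.Icc (0 : ℝ) 1, |b x| ≤ Mb) →
      (∀ x ∈ Set.Ioo (0 : ℝ) 1,
        -ε * iteratedDeriv 2 u x + μ * a x * deriv u x + b x * u x = f x) →
      ∀ (r Mu Mf : ℝ), 0 < r → r ≤ 1 / 2 →
        (∀ x ∈ Set.Icc (0 : ℝ) 1, |u x| ≤ Mu) →
        (∀ x ∈ Set.Icc (0 : ℝ) 1, |f x| ≤ Mf) →
        ∀ x ∈ Set.Icc (0 : ℝ) 1,
          |deriv u x| ≤ C * (1 / r + μ / ε + r / ε) * Mu + (r / ε) * Mf := by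
  have hC0 : (0:ℝ) ≤ 2*|Ma| + |Ma'| + |Mb| := by positivity
  refine ⟨2 + 2*|Ma| + |Ma'| + |Mb|, by linarith, ?_⟩
  intro ε μ a b f u hε hε1 hμ hμ1 ha hb hf hu hMa hMa' hMb hODE r Mu Mf hr hr2 hMu hMf x hx
  set C : ℝ := 2 + 2*|Ma| + |Ma'| + |Mb| with hCdef
  have hC2 : (2:ℝ) ≤ C := by rw [hCdef]; linarith
  clear_value C
  have h01 : (0:ℝ) ∈ Icc (0:ℝ) 1 := by norm_num
  have hMu0 : 0 ≤ Mu := (abs_nonneg _).trans (hMu 0 h01)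
  have hMf0 : 0 ≤ Mf := (abs_nonneg _).trans (hMf 0 h01)
  have hMa0 : 0 ≤ Ma := (abs_nonneg _).trans (hMa 0 h01)
  have hMa'0 : 0 ≤ Ma' := (abs_nonneg _).trans (hMa' 0 h01)
  have hMb0 : 0 ≤ Mb := (abs_nonneg _).trans (hMb 0 h01)
  -- smoothness facts
  have hud : Differentiable ℝ u := hu.differentiable (by norm_num)
  have hu1 : ContDiff ℝ 1 (deriv u) :=
    (contDiff_succ_iff_deriv.mp (show ContDiff ℝ (1+1) u from by norm_num at hu ⊢; exact hu)).2.2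
  have hud2 : Differentiable ℝ (deriv u) := hu1.differentiable one_ne_zero
  have hcu' : Continuous (deriv u) := hud2.continuous
  have hcu'' : Continuous (deriv (deriv u)) := (contDiff_one_iff_deriv.mp hu1).2
  have had : Differentiable ℝ a := ha.differentiable one_ne_zero
  have hca' : Continuous (deriv a) := (contDiff_one_iff_deriv.mp ha).2
  have hcu : Continuous u := hud.continuous
  have hca : Continuous a := had.continuous
  -- interval setup
  set α := min x (1 - r) with hα
  have hα0 : 0 ≤ α := le_min hx.1 (by linarith)
  have hα1 : α + r ≤ 1 := by have := min_le_right x (1-r); linarith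
  have hxα : α ≤ x := min_le_left _ _
  have hxβ : x ≤ α + r := by
    rcases le_total x (1-r) with h | h
    · rw [hα, min_eq_left h]; linarith
    · rw [hα, min_eq_right h]; linarith [hx.2]
  -- mean value theorem
  obtain ⟨y, hy, hyd⟩ := exists_deriv_eq_slope u (show α < α + r by linarith)
    hcu.continuousOn hud.differentiableOn
  have hyI : y ∈ Icc (0:ℝ) 1 := ⟨by linarith [hy.1], by linarith [hy.2]⟩
  have hdy : |deriv u y| ≤ 2 * Mu / r := by
    have hA := hMu (α+r) ⟨by linarith, hα1⟩
    have hB := hMu α ⟨hα0, by linarith⟩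
    have hnum : |u (α+r) - u α| ≤ 2 * Mu := (abs_sub _ _).trans (by linarith)
    rw [hyd, show α + r - α = r by ring, abs_div, abs_of_pos hr]
    exact (div_le_div_iff_of_pos_right hr).mpr hnum
  have hsub : ∀ t, t ∈ uIoc y x → t ∈ Icc (0:ℝ) 1 :=
    fun t ht => uIcc_subset_Icc hyI hx (uIoc_subset_uIcc ht)
  -- fundamental theorem of calculus
  have hFTC : ∫ t in y..x, deriv (deriv u) t = deriv u x - deriv u y :=
    integral_deriv_eq_sub (fun t _ => hud2 t) (hcu''.intervalIntegrable _ _)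
  -- rewrite integral using the ODE
  have hcong : ∫ t in y..x, ε * deriv (deriv u) t
      = ∫ t in y..x, (μ * (a t * deriv u t) + b t * u t - f t) := by
    apply intervalIntegral.integral_congr_ae
    filter_upwards [compl_mem_ae_iff.mpr
      (((Set.finite_singleton (1:ℝ)).insert 0).measure_zero volume)] with t ht hti
    have htI : t ∈ Icc (0:ℝ) 1 := hsub t hti
    have ht0 : t ≠ 0 := fun h => ht (by simp [h])
    have ht1 : t ≠ 1 := fun h => ht (by simp [h])
    have htO : t ∈ Ioo (0:ℝ) 1 := ⟨lt_of_le_of_ne htI.1 (Ne.symm ht0), lt_of_le_of_ne htI.2 ht1⟩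
    have hode := hODE t htO
    rw [show (2:ℕ) = 1+1 from rfl, iteratedDeriv_succ, iteratedDeriv_one] at hode
    linarith
  -- integrability
  have hIa : IntervalIntegrable (fun t => a t * deriv u t) volume y x :=
    (hca.mul hcu').intervalIntegrable _ _
  have hIb : IntervalIntegrable (fun t => b t * u t) volume y x :=
    (hb.mul hcu).intervalIntegrable _ _
  have hIf : IntervalIntegrable f volume y x := hf.intervalIntegrable _ _
  -- integration by parts
  have hIBP : (∫ t in y..x, a t * deriv u t)
      = a x * u x - a y * u y - ∫ t in y..x, deriv a t * u t :=
    integral_mul_deriv_eq_deriv_mul (fun t _ => (had t).hasDerivAt)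
      (fun t _ => (hud t).hasDerivAt) (hca'.intervalIntegrable _ _)
      (hcu'.intervalIntegrable _ _)
  have hL : ∫ t in y..x, ε * deriv (deriv u) t = ε * (deriv u x - deriv u y) := by
    rw [intervalIntegral.integral_const_mul, hFTC]
  have hkey : ε * (deriv u x - deriv u y)
      = μ * (a x * u x - a y * u y - ∫ t in y..x, deriv a t * u t)
        + (∫ t in y..x, b t * u t) - ∫ t in y..x, f t := by
    rw [← hL, hcong,
      intervalIntegral.integral_sub ((hIa.const_mul μ).add hIb) hIf,
      intervalIntegral.integral_add (hIa.const_mul μ) hIb,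
      intervalIntegral.integral_const_mul, hIBP]
  -- bounds on the integrals
  have hxy : |x - y| ≤ r := by
    rw [abs_le]; constructor
    · linarith [hy.2]
    · linarith [hy.1]
  have hbI1 : |∫ t in y..x, deriv a t * u t| ≤ Ma' * Mu * r := by
    have h := intervalIntegral.norm_integral_le_of_norm_le_const (C := Ma' * Mu)
      (f := fun t => deriv a t * u t) (a := y) (b := x) (fun t ht => by
        have htI := hsub t ht
        rw [Real.norm_eq_abs, abs_mul]
        exact mul_le_mul (hMa' t htI) (hMu t htI) (abs_nonneg _) hMa'0)
    rw [Real.norm_eq_abs] at h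
    exact h.trans (mul_le_mul_of_nonneg_left hxy (by positivity))
  have hbI2 : |∫ t in y..x, b t * u t| ≤ Mb * Mu * r := by
    have h := intervalIntegral.norm_integral_le_of_norm_le_const (C := Mb * Mu)
      (f := fun t => b t * u t) (a := y) (b := x) (fun t ht => by
        have htI := hsub t ht
        rw [Real.norm_eq_abs, abs_mul]
        exact mul_le_mul (hMb t htI) (hMu t htI) (abs_nonneg _) hMb0)
    rw [Real.norm_eq_abs] at h
    exact h.trans (mul_le_mul_of_nonneg_left hxy (by positivity))
  have hbI3 : |∫ t in y..x, f t| ≤ Mf * r := by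
    have h := intervalIntegral.norm_integral_le_of_norm_le_const (C := Mf)
      (f := f) (a := y) (b := x) (fun t ht => by
        rw [Real.norm_eq_abs]; exact hMf t (hsub t ht))
    rw [Real.norm_eq_abs] at h
    exact h.trans (mul_le_mul_of_nonneg_left hxy hMf0)
  -- abbreviate the integrals
  obtain ⟨I1, hI1⟩ : ∃ z : ℝ, (∫ t in y..x, deriv a t * u t) = z := ⟨_, rfl⟩
  obtain ⟨I2, hI2⟩ : ∃ z : ℝ, (∫ t in y..x, b t * u t) = z := ⟨_, rfl⟩
  obtain ⟨I3, hI3⟩ : ∃ z : ℝ, (∫ t in y..x, f t) = z := ⟨_, rfl⟩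
  rw [hI1] at hkey hbI1
  rw [hI2] at hkey hbI2
  rw [hI3] at hkey hbI3
  have hax : |a x * u x| ≤ Ma * Mu := by
    rw [abs_mul]; exact mul_le_mul (hMa x hx) (hMu x hx) (abs_nonneg _) hMa0
  have hay : |a y * u y| ≤ Ma * Mu := by
    rw [abs_mul]; exact mul_le_mul (hMa y hyI) (hMu y hyI) (abs_nonneg _) hMa0
  set E := μ * (a x * u x - a y * u y - I1) + I2 - I3 with hE
  have hEb : |E| ≤ μ * (2*Ma*Mu + Ma'*Mu*r) + Mb*Mu*r + Mf*r := by
    have h1 : |a x * u x - a y * u y - I1| ≤ 2*Ma*Mu + Ma'*Mu*r := by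
      calc |a x * u x - a y * u y - I1| ≤ |a x * u x - a y * u y| + |I1| := abs_sub _ _
        _ ≤ (|a x * u x| + |a y * u y|) + |I1| := by
            have := abs_sub (a x * u x) (a y * u y); linarith
        _ ≤ 2*Ma*Mu + Ma'*Mu*r := by linarith
    have h2 : |μ * (a x * u x - a y * u y - I1)| ≤ μ * (2*Ma*Mu + Ma'*Mu*r) := by
      rw [abs_mul, abs_of_nonneg hμ]
      exact mul_le_mul_of_nonneg_left h1 hμ
    calc |E| ≤ |μ * (a x * u x - a y * u y - I1) + I2| + |I3| := abs_sub _ _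
      _ ≤ (|μ * (a x * u x - a y * u y - I1)| + |I2|) + |I3| := by
          have := abs_add_le (μ * (a x * u x - a y * u y - I1)) I2; linarith
      _ ≤ μ * (2*Ma*Mu + Ma'*Mu*r) + Mb*Mu*r + Mf*r := by linarith
  have hdx : deriv u x = deriv u y + E / ε := by
    have h : deriv u x - deriv u y = E / ε := by
      rw [eq_div_iff (ne_of_gt hε)]
      linear_combination hkey
    linarith
  have hmain : |deriv u x| ≤ 2*Mu/r + (μ * (2*Ma*Mu + Ma'*Mu*r) + Mb*Mu*r + Mf*r) / ε := by
    calc |deriv u x| = |deriv u y + E / ε| := by rw [hdx]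
      _ ≤ |deriv u y| + |E / ε| := abs_add_le _ _
      _ = |deriv u y| + |E| / ε := by rw [abs_div, abs_of_pos hε]
      _ ≤ 2*Mu/r + (μ * (2*Ma*Mu + Ma'*Mu*r) + Mb*Mu*r + Mf*r) / ε :=
          add_le_add hdy ((div_le_div_iff_of_pos_right hε).mpr hEb)
  -- final arithmetic
  have hnum : μ * (2*Ma*Mu + Ma'*Mu*r) + Mb*Mu*r + Mf*r ≤ C*μ*Mu + C*r*Mu + r*Mf := by
    have e1 : 2*Ma ≤ C := by
      have h0 := le_abs_self Ma
      have h1 : (0:ℝ) ≤ |Ma'| + |Mb| := by positivity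
      simp only [hCdef]; linarith
    have e2 : Ma' + Mb ≤ C := by
      have h0 := le_abs_self Ma'
      have h0' := le_abs_self Mb
      have h1 : (0:ℝ) ≤ |Ma| := abs_nonneg _
      simp only [hCdef]; linarith
    have fA : (2*Ma)*(μ*Mu) ≤ C*(μ*Mu) := mul_le_mul_of_nonneg_right e1 (mul_nonneg hμ hMu0)
    have fB : μ*(Ma'*Mu*r) ≤ 1*(Ma'*Mu*r) := mul_le_mul_of_nonneg_right hμ1 (by positivity)
    have fD : (Ma'+Mb)*(Mu*r) ≤ C*(Mu*r) := mul_le_mul_of_nonneg_right e2 (mul_nonneg hMu0 hr.le)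
    linarith [fA, fB, fD]
  have h1' : 2*Mu/r ≤ C*Mu/r :=
    (div_le_div_iff_of_pos_right hr).mpr (mul_le_mul_of_nonneg_right hC2 hMu0)
  have h2' : (μ * (2*Ma*Mu + Ma'*Mu*r) + Mb*Mu*r + Mf*r) / ε
      ≤ (C*μ*Mu + C*r*Mu + r*Mf) / ε := (div_le_div_iff_of_pos_right hε).mpr hnum
  have hsplit : C * (1/r + μ/ε + r/ε) * Mu + (r/ε) * Mf
      = C*Mu/r + (C*μ*Mu + C*r*Mu + r*Mf) / ε := by
    field_simp
    ring
  rw [show (1:ℝ)/r + μ/ε + r/ε = 1/r + μ/ε + r/ε from rfl]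
  calc |deriv u x| ≤ 2*Mu/r + (μ * (2*Ma*Mu + Ma'*Mu*r) + Mb*Mu*r + Mf*r) / ε := hmain
    _ ≤ C*Mu/r + (C*μ*Mu + C*r*Mu + r*Mf) / ε := add_le_add h1' h2'
    _ = C * (1/r + μ/ε + r/ε) * Mu + (r/ε) * Mf := hsplit.symm
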